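/- The group Bd(ℤ⁺) contains a subgroup isomorphic to ℚ/ℤ. -/

import Mathlib

open Finset

local notation "fac" => Nat.factorial

def dg (j n : ℕ) : ℕ := n / fac (j+1) % (j+2)

def fq (n : ℕ) : ℚ := ∑ j ∈ range n, (dg j n : ℚ) / fac (j+2)

lemma self_lt_fac_succ (n : ℕ) : n < fac (n+1) :=
  Nat.lt_of_lt_of_le (Nat.lt_succ_self n) (Nat.self_le_factorial _)

lemma dg_eq_zero {j n : ℕ} (h : n ≤ j) : dg j n = 0 := by
  have : n < fac (j+1) := Nat.lt_of_le_of_lt h (self_lt_fac_succ j)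
  simp [dg, Nat.div_eq_of_lt this]

lemma fq_eq_sum {n m : ℕ} (h : n ≤ m) : fq n = ∑ j ∈ range m, (dg j n : ℚ) / fac (j+2) := by
  rw [fq]
  apply Finset.sum_subset (Finset.range_subset_range.2 h)
  intro j _ hj
  rw [dg_eq_zero (le_of_not_gt (fun hc => hj (Finset.mem_range.2 hc)))]
  simp

lemma dg_add_low {j d N j' : ℕ} (hj : j < fac d) (h2 : j' + 2 ≤ d) :
    dg j' (j + fac d * N) = dg j' j := by
  have hdvd : fac (j'+1) ∣ fac d := Nat.factorial_dvd_factorial (by omega)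
  have hdvd2 : fac (j'+2) ∣ fac d := Nat.factorial_dvd_factorial h2
  obtain ⟨K, hK⟩ := hdvd
  have hpos : 0 < fac (j'+1) := Nat.factorial_pos _
  have hdiv : (j + fac d * N) / fac (j'+1) = j / fac (j'+1) + K * N := by
    rw [hK, mul_assoc, Nat.add_mul_div_left _ _ hpos]
  have hKdvd : (j' + 2) ∣ K := by
    have h5 : fac (j'+1) * (j'+2) ∣ fac (j'+1) * K := by
      rw [← hK]
      have h6 : fac (j'+2) = fac (j'+1) * (j'+2) := by
        rw [Nat.factorial_succ]; ring
      rw [← h6]; exact hdvd2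
    exact (mul_dvd_mul_iff_left hpos.ne').1 h5
  obtain ⟨K', hK'⟩ := hKdvd
  rw [dg, hdiv, dg, hK', mul_assoc, Nat.add_mul_mod_self_left]

lemma dg_add_high {j d N j' : ℕ} (hj : j < fac d) (hd : d ≤ j' + 1) :
    dg j' (j + fac d * N) = dg j' (fac d * N) := by
  have hdvd : fac d ∣ fac (j'+1) := Nat.factorial_dvd_factorial hd
  obtain ⟨K, hK⟩ := hdvd
  have hpos : 0 < fac d := Nat.factorial_pos _
  have h1 : (j + fac d * N) / fac (j'+1) = N / K := by
    rw [hK, ← Nat.div_div_eq_div_mul, Nat.add_mul_div_left _ _ hpos,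
      Nat.div_eq_of_lt hj, zero_add]
  have h2 : (fac d * N) / fac (j'+1) = N / K := by
    rw [hK, ← Nat.div_div_eq_div_mul, Nat.mul_div_cancel_left _ hpos]
  rw [dg, h1, dg, h2]

lemma fq_split {j d N : ℕ} (hj : j < fac d) :
    fq (j + fac d * N) = fq j + fq (fac d * N) := by
  set M := j + fac d * N + 1 with hM
  have h1 : j + fac d * N ≤ M := by omega
  have h2 : j ≤ M := by omega
  have h3 : fac d * N ≤ M := by omega
  rw [fq_eq_sum h1, fq_eq_sum h2, fq_eq_sum h3, ← Finset.sum_add_distrib]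
  apply Finset.sum_congr rfl
  intro j' _
  by_cases hc : j' + 2 ≤ d
  · rw [dg_add_low hj hc]
    have h4 : dg j' (fac d * N) = 0 := by
      have h5 := dg_add_low (j := 0) (d := d) (N := N) (j' := j') (Nat.factorial_pos d) hc
      simpa [dg_eq_zero (Nat.zero_le j')] using h5
    rw [h4]; simp
  · have hd : d ≤ j' + 1 := by omega
    rw [dg_add_high hj hd]
    have h4 : dg j' j = 0 := by
      have h5 : j < fac (j'+1) := lt_of_lt_of_le hj (Nat.factorial_le (by omega))
      simp [dg, Nat.div_eq_of_lt h5]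
    rw [h4]; simp

lemma fq_fac_mul {d N : ℕ} (hN : N ≤ d) : fq (fac d * N) = (N : ℚ) / fac (d+1) := by
  rcases Nat.eq_zero_or_pos d with hd | hd
  · subst hd
    interval_cases N
    simp [fq]
  have hlt : fac d * N < fac (d+1) := by
    rw [Nat.factorial_succ]
    calc fac d * N ≤ fac d * d := Nat.mul_le_mul_left _ hN
    _ < (d+1) * fac d := by
        rw [mul_comm]
        exact Nat.mul_lt_mul_of_lt_of_le (by omega) le_rfl (Nat.factorial_pos d)
  have hsum : fq (fac d * N) = ∑ j ∈ range (fac d * N + 1 + d),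
      (dg j (fac d * N) : ℚ) / fac (j+2) := fq_eq_sum (by omega)
  rw [hsum]
  rw [Finset.sum_eq_single (d - 1)]
  · have hdg : dg (d-1) (fac d * N) = N := by
      rw [dg]
      have h1 : d - 1 + 1 = d := by omega
      rw [h1, Nat.mul_div_cancel_left _ (Nat.factorial_pos d)]
      exact Nat.mod_eq_of_lt (by omega)
    have h2 : d - 1 + 2 = d + 1 := by omega
    rw [hdg, h2]
  · intro j' _ hne
    by_cases hc : j' + 2 ≤ d
    · have h5 := dg_add_low (j := 0) (d := d) (N := N) (j' := j') (Nat.factorial_pos d) hc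
      simp only [zero_add] at h5
      rw [h5, dg_eq_zero (Nat.zero_le j')]
      simp
    · have hd2 : d ≤ j' + 1 := by omega
      have hj' : d + 1 ≤ j' + 1 := by omega
      have h5 : dg j' (fac d * N) = 0 := by
        rw [dg, Nat.div_eq_of_lt]
        · simp
        · exact lt_of_lt_of_le hlt (Nat.factorial_le hj')
      rw [h5]; simp
  · intro hmem
    exfalso
    apply hmem
    rw [Finset.mem_range]
    omega

lemma fac_succ_q (d : ℕ) : (fac (d+1) : ℚ) = (d+1) * fac d := by
  rw [Nat.factorial_succ]; push_cast; ring

lemma div_lt_fac {x d : ℕ} (h : x < fac (d+1)) : x / fac d < d + 1 :=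
  Nat.div_lt_of_lt_mul (by rw [Nat.factorial_succ, mul_comm (d+1) (fac d)] at h; exact h)

lemma fq_denom {d : ℕ} : ∀ j < fac d, ∃ A < fac d, fq j = (A : ℚ) / fac d := by
  induction d with
  | zero =>
    intro j hj
    simp [Nat.factorial] at hj
    subst hj
    exact ⟨0, by simp [Nat.factorial], by simp [fq]⟩
  | succ d ih =>
    intro j hj
    have hjd : j % fac d < fac d := Nat.mod_lt _ (Nat.factorial_pos d)
    obtain ⟨A, hA, hfqA⟩ := ih _ hjd
    have hN : j / fac d ≤ d := by have := div_lt_fac hj; omega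
    refine ⟨A * (d+1) + j / fac d, ?_, ?_⟩
    · calc A * (d+1) + j / fac d < A * (d+1) + (d+1) := by omega
      _ = (A+1) * (d+1) := by ring
      _ ≤ fac d * (d+1) := Nat.mul_le_mul_right _ hA
      _ = fac (d+1) := by rw [Nat.factorial_succ]; ring
    · have hrw : j = j % fac d + fac d * (j / fac d) := by rw [Nat.mod_add_div]
      conv_lhs => rw [hrw]
      rw [fq_split hjd, hfqA, fq_fac_mul hN, fac_succ_q]
      have h0 : (fac d : ℚ) ≠ 0 := by positivity
      have h1 : ((d:ℚ)+1) ≠ 0 := by positivity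
      field_simp
      push_cast
      ring

lemma fq_surj {d : ℕ} : ∀ A < fac d, ∃ j < fac d, fq j = (A : ℚ) / fac d := by
  induction d with
  | zero =>
    intro A hA
    simp [Nat.factorial] at hA
    subst hA
    exact ⟨0, by simp [Nat.factorial], by simp [fq]⟩
  | succ d ih =>
    intro A hA
    have hA' : A / (d+1) < fac d := by
      apply Nat.div_lt_of_lt_mul
      rw [Nat.factorial_succ] at hA
      exact hA
    obtain ⟨j', hj', hfq⟩ := ih _ hA'
    have hN : A % (d+1) ≤ d := by
      have := Nat.mod_lt A (show 0 < d+1 by omega); omega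
    refine ⟨j' + fac d * (A % (d+1)), ?_, ?_⟩
    · have h6 : fac d * (A % (d+1)) ≤ fac d * d := Nat.mul_le_mul_left _ hN
      have h7 : fac d + fac d * d = fac (d+1) := by rw [Nat.factorial_succ]; ring
      omega
    · rw [fq_split hj', hfq, fq_fac_mul hN, fac_succ_q]
      have h0 : (fac d : ℚ) ≠ 0 := by positivity
      have h1 : ((d:ℚ)+1) ≠ 0 := by positivity
      have hdm : (d+1) * (A/(d+1)) + A % (d+1) = A := Nat.div_add_mod A (d+1)
      conv_rhs => rw [← hdm]
      push_cast
      field_simp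

lemma fq_inj_level {d : ℕ} : ∀ n < fac d, ∀ m < fac d, fq n = fq m → n = m := by
  induction d with
  | zero => intro n hn m hm _; simp [Nat.factorial] at hn hm; omega
  | succ d ih =>
    intro n hn m hm heq
    have hn' : n % fac d < fac d := Nat.mod_lt _ (Nat.factorial_pos d)
    have hm' : m % fac d < fac d := Nat.mod_lt _ (Nat.factorial_pos d)
    obtain ⟨A, hA, hfA⟩ := fq_denom _ hn'
    obtain ⟨B, hB, hfB⟩ := fq_denom _ hm'
    have hNn : n / fac d ≤ d := by have := div_lt_fac hn; omega
    have hNm : m / fac d ≤ d := by have := div_lt_fac hm; omega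
    have hrn : n = n % fac d + fac d * (n / fac d) := by rw [Nat.mod_add_div]
    have hrm : m = m % fac d + fac d * (m / fac d) := by rw [Nat.mod_add_div]
    rw [hrn, fq_split hn', hfA, fq_fac_mul hNn, hrm, fq_split hm', hfB, fq_fac_mul hNm,
      fac_succ_q] at heq
    have h0 : (fac d : ℚ) ≠ 0 := by positivity
    have h1 : ((d:ℚ)+1) ≠ 0 := by positivity
    have hkey : (d+1) * A + n / fac d = (d+1) * B + m / fac d := by
      have h3 : (((d+1) * A + n / fac d : ℕ) : ℚ) = (((d+1) * B + m / fac d : ℕ) : ℚ) := by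
        have h4 : (((d+1) * A + n / fac d : ℕ) : ℚ) * (fac d) =
            (((d+1) * B + m / fac d : ℕ) : ℚ) * (fac d) := by
          field_simp at heq
          push_cast
          linear_combination (fac d : ℚ) * heq
        exact mul_right_cancel₀ h0 h4
      exact_mod_cast h3
    have hAB : A = B := by
      have e1 : ((d+1) * A + n / fac d) / (d+1) = A := by
        rw [Nat.mul_add_div (by omega), Nat.div_eq_of_lt (by omega)]
        omega
      have e2 : ((d+1) * B + m / fac d) / (d+1) = B := by
        rw [Nat.mul_add_div (by omega), Nat.div_eq_of_lt (by omega)]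
        omega
      rw [← e1, ← e2, hkey]
    subst hAB
    have hdiv : n / fac d = m / fac d := by omega
    have hmod : n % fac d = m % fac d := ih _ hn' _ hm' (by rw [hfA, hfB])
    rw [hrn, hrm, hmod, hdiv]

abbrev QZ := ℚ ⧸ AddSubgroup.zmultiples (1 : ℚ)

lemma mk_shift (y : ℚ) (z : ℤ) :
    (QuotientAddGroup.mk (y + z) : QZ) = QuotientAddGroup.mk y := by
  rw [QuotientAddGroup.eq_iff_sub_mem]
  rw [AddSubgroup.mem_zmultiples_iff]
  exact ⟨z, by simp⟩

lemma mk_eq_of_small {a b : ℚ} (ha0 : 0 ≤ a) (ha1 : a < 1) (hb0 : 0 ≤ b) (hb1 : b < 1)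
    (h : (QuotientAddGroup.mk a : QZ) = QuotientAddGroup.mk b) : a = b := by
  rw [QuotientAddGroup.eq_iff_sub_mem, AddSubgroup.mem_zmultiples_iff] at h
  obtain ⟨k, hk⟩ := h
  simp only [zsmul_eq_mul, mul_one] at hk
  have hk0 : k = 0 := by
    have h1 : (k:ℚ) < 1 := by rw [hk]; linarith
    have h2 : (-1:ℚ) < k := by rw [hk]; linarith
    have h1' : k < 1 := by exact_mod_cast h1
    have h2' : (-1:ℤ) < k := by exact_mod_cast h2
    omega
  rw [hk0] at hk
  push_cast at hk
  linarith

lemma fq_bounds (n : ℕ) : 0 ≤ fq n ∧ fq n < 1 := by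
  obtain ⟨A, hA, hfq⟩ := fq_denom n (self_lt_fac_succ n)
  rw [hfq]
  have h0 : (0:ℚ) < fac (n+1) := by positivity
  constructor
  · positivity
  · rw [div_lt_one h0]
    exact_mod_cast hA

noncomputable def fQZ (n : ℕ) : QZ := QuotientAddGroup.mk (fq n)

lemma fQZ_inj : Function.Injective fQZ := by
  intro n m h
  obtain ⟨hn0, hn1⟩ := fq_bounds n
  obtain ⟨hm0, hm1⟩ := fq_bounds m
  have heq : fq n = fq m := mk_eq_of_small hn0 hn1 hm0 hm1 h
  have hd : n < fac (max n m + 1) :=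
    lt_of_le_of_lt (le_max_left n m) (self_lt_fac_succ _)
  have hd' : m < fac (max n m + 1) :=
    lt_of_le_of_lt (le_max_right n m) (self_lt_fac_succ _)
  exact fq_inj_level n hd m hd' heq

lemma exists_rep (q : QZ) : ∃ d A : ℕ, A < fac d ∧
    q = QuotientAddGroup.mk ((A : ℚ) / fac d) := by
  obtain ⟨x, rfl⟩ := QuotientAddGroup.mk_surjective q
  set d := x.den with hd
  have hden : x.den ∣ fac d := Nat.dvd_factorial x.pos le_rfl
  set k := fac d / x.den with hkdef
  have hk : x.den * k = fac d := Nat.mul_div_cancel' hden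
  have hkpos : 0 < k := Nat.pos_of_ne_zero (fun h => by
    simp [h] at hk
    have := Nat.factorial_pos d
    omega)
  set B : ℤ := x.num * k with hB
  have hfacpos : (0:ℚ) < fac d := by positivity
  have hx : (B : ℚ) / (fac d) = x := by
    rw [hB, ← hk]
    push_cast
    rw [mul_div_mul_right _ _ (by exact_mod_cast hkpos.ne' : (k:ℚ) ≠ 0)]
    exact Rat.num_div_den x
  have hmodpos : 0 ≤ B % fac d := Int.emod_nonneg B (by positivity)
  have hmodlt : B % fac d < fac d := Int.emod_lt_of_pos B (by exact_mod_cast Nat.factorial_pos d)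
  set A : ℕ := (B % fac d).toNat with hA
  have hAcast : (A : ℤ) = B % fac d := Int.toNat_of_nonneg hmodpos
  refine ⟨d, A, by omega, ?_⟩
  have hdecomp : x = (A : ℚ) / fac d + (B / fac d : ℤ) := by
    rw [← hx]
    have hBd : B = fac d * (B / fac d) + B % fac d := (Int.mul_ediv_add_emod B (fac d)).symm
    have : (B : ℚ) = (fac d : ℚ) * ((B / fac d : ℤ) : ℚ) + ((A:ℤ) : ℚ) := by
      rw [hAcast]
      exact_mod_cast congrArg (fun z : ℤ => (z : ℚ)) hBd
    rw [this]
    push_cast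
    field_simp
    ring
  rw [hdecomp, mk_shift]

lemma fQZ_surj : Function.Surjective fQZ := by
  intro q
  obtain ⟨d, A, hA, rfl⟩ := exists_rep q
  obtain ⟨j, _, hj⟩ := fq_surj A hA
  exact ⟨j, by rw [fQZ, hj]⟩

noncomputable def eQZ : ℕ ≃ QZ := Equiv.ofBijective fQZ ⟨fQZ_inj, fQZ_surj⟩

lemma eQZ_apply (n : ℕ) : eQZ n = QuotientAddGroup.mk (fq n) := rfl

noncomputable def toPerm (q : QZ) : Equiv.Perm ℕ :=
  (eQZ.trans (Equiv.addLeft q)).trans eQZ.symm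

lemma toPerm_apply (q : QZ) (n : ℕ) : toPerm q n = eQZ.symm (q + eQZ n) := rfl

lemma toPerm_bound {d A : ℕ} (hA : A < fac d) (n : ℕ) :
    dist n (toPerm (QuotientAddGroup.mk ((A:ℚ)/fac d)) n) ≤ (fac d : ℝ) := by
  set q : QZ := QuotientAddGroup.mk ((A:ℚ)/fac d) with hq
  set j := n % fac d with hjdef
  set N := n / fac d with hNdef
  have hj : j < fac d := Nat.mod_lt _ (Nat.factorial_pos d)
  have hn : n = j + fac d * N := by rw [hjdef, hNdef, Nat.mod_add_div]
  obtain ⟨B, hB, hfB⟩ := fq_denom j hj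
  set C := (A + B) % fac d with hCdef
  set k := (A + B) / fac d with hkdef
  have hC : C < fac d := Nat.mod_lt _ (Nat.factorial_pos d)
  obtain ⟨j'', hj'', hfj''⟩ := fq_surj C hC
  set m := j'' + fac d * N with hm
  have hfacpos : (0:ℚ) < fac d := by positivity
  have key : q + eQZ n = eQZ m := by
    rw [eQZ_apply, eQZ_apply, hq]
    have hadd : (QuotientAddGroup.mk ((A:ℚ)/fac d) : QZ) + QuotientAddGroup.mk (fq n)
      = QuotientAddGroup.mk ((A:ℚ)/fac d + fq n) := rfl
    rw [hadd]
    have hfqn : fq n = fq j + fq (fac d * N) := by rw [hn, fq_split hj]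
    have hfqm : fq m = fq j'' + fq (fac d * N) := by rw [hm, fq_split hj'']
    have harith : (A:ℚ)/fac d + fq n = fq m + (k : ℤ) := by
      rw [hfqn, hfqm, hfB, hfj'']
      have hABk : A + B = fac d * k + C := by rw [hkdef, hCdef, Nat.div_add_mod]
      have : ((A:ℚ) + B) = (fac d : ℚ) * k + C := by exact_mod_cast hABk
      push_cast
      field_simp
      linarith [this]
    rw [harith, mk_shift]
  have hperm : toPerm q n = m := by
    rw [toPerm_apply, key, Equiv.symm_apply_apply]
  rw [hperm, Nat.dist_eq]
  have hnm : (n:ℝ) - m = (j:ℝ) - j'' := by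
    rw [hn, hm]; push_cast; ring
  rw [hnm, abs_le]
  have c1 : (j:ℝ) < fac d := by exact_mod_cast hj
  have c2 : (j'':ℝ) < fac d := by exact_mod_cast hj''
  have c3 : (0:ℝ) ≤ j := Nat.cast_nonneg j
  have c4 : (0:ℝ) ≤ j'' := Nat.cast_nonneg j''
  constructor <;> linarith

def Bd (X : Type*) [MetricSpace X] : Subgroup (Equiv.Perm X) where
  carrier := {g : Equiv.Perm X | ∃ r : ℕ, ∀ x : X, dist x (g x) ≤ r}
  one_mem' := ⟨0, fun x => by simp⟩
  mul_mem' := by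
    rintro a b ⟨r, hr⟩ ⟨s, hs⟩
    refine ⟨s + r, fun x => ?_⟩
    calc dist x ((a * b) x) ≤ dist x (b x) + dist (b x) (a (b x)) := dist_triangle _ _ _
    _ ≤ (s : ℝ) + r := add_le_add (hs x) (hr (b x))
    _ = ((s + r : ℕ) : ℝ) := by push_cast; ring
  inv_mem' := by
    rintro a ⟨r, hr⟩
    exact ⟨r, fun x => by simpa [dist_comm] using hr (a⁻¹ x)⟩

lemma toPerm_mem (q : QZ) : toPerm q ∈ Bd ℕ := by
  obtain ⟨d, A, hA, rfl⟩ := exists_rep q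
  exact ⟨fac d, fun n => toPerm_bound hA n⟩

lemma toPerm_add (a b : QZ) : toPerm (a + b) = toPerm a * toPerm b := by
  ext n
  show eQZ.symm ((a + b) + eQZ n) = eQZ.symm (a + eQZ (eQZ.symm (b + eQZ n)))
  rw [Equiv.apply_symm_apply, add_assoc]

lemma toPerm_zero : toPerm 0 = 1 := by
  ext n
  show eQZ.symm (0 + eQZ n) = n
  rw [zero_add, Equiv.symm_apply_apply]

theorem bd_contains_Q_mod_Z :
    ∃ φ : Multiplicative (ℚ ⧸ AddSubgroup.zmultiples (1 : ℚ)) →* Bd ℕ,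
      Function.Injective φ := by
  refine ⟨{ toFun := fun q => ⟨toPerm (Multiplicative.toAdd q), toPerm_mem _⟩
            map_one' := Subtype.ext (by simp [toPerm_zero])
            map_mul' := fun a b => Subtype.ext (by simp [toPerm_add]) }, ?_⟩
  intro a b h
  have h2 : toPerm (Multiplicative.toAdd a) = toPerm (Multiplicative.toAdd b) :=
    congrArg Subtype.val h
  have h3 : Multiplicative.toAdd a = Multiplicative.toAdd b := by
    have h4 := congrArg (fun p : Equiv.Perm ℕ => p 0) h2
    simp only [toPerm_apply] at h4
    have h5 := eQZ.symm.injective h4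
    exact add_right_cancel h5
  exact h3
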